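/- The Painlevé 4 Lax pair in the canonical gauge satisfies the zero-curvature equation: ℏ∂_σ L̃₀^{P4}(ξ) = ℏ∂_ξ Ã₀^{P4}(ξ) + [Ã₀^{P4}(ξ), L̃₀^{P4}(ξ)], given that (Q̌,P̌) evolve by the Hamiltonian flow of Ham^{P4}(Q̌,P̌) = (Q̌-σ)P̌² + ℏP̌ - Q̌³ + σQ̌² - (θ_a - ℏ)Q̌ - θ_b²/(4(Q̌-σ)). -/

import Mathlib

namespace P4Canonical

/-- The Painlevé 4 Lax matrix `L̃₀^{P4}(ξ)` in the canonical gauge, with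
`θ_a = s_{∞⁽¹⁾,0} - s_{∞⁽²⁾,0}`, `θ_b = s_{X₁⁽¹⁾,0} - s_{X₁⁽²⁾,0}`,
`θ_c = s_{X₁⁽¹⁾,0} + s_{X₁⁽²⁾,0}`. -/
noncomputable def L0P4 (θa θb θc : ℂ) (Q P σ x : ℂ) : Matrix (Fin 2) (Fin 2) ℂ :=
  !![-x - σ + (Q*(P + Q - σ) - σ*P + θc/2)/x,
     1 + (σ - Q)/x;
     2*(Q - σ)*(Q + P) + θa + ((Q + P)^2*(Q - σ) - θb^2/(4*(Q - σ)))/x,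
     x + σ + (-(Q*(P + Q - σ)) + σ*P + θc/2)/x]

/-- The Painlevé 4 deformation matrix `Ã₀^{P4}(ξ)` in the canonical gauge. -/
noncomputable def A0P4 (θa : ℂ) (Q P σ x : ℂ) : Matrix (Fin 2) (Fin 2) ℂ :=
  !![-x - Q, 1;
     2*(Q - σ)*(P + Q) + θa, x + Q]

set_option maxHeartbeats 1000000 in
/-- Given that `(Q̌,P̌)` evolve by the Hamiltonian flow of
`Ham^{P4}(Q̌,P̌) = (Q̌-σ)P̌² + ℏP̌ - Q̌³ + σQ̌² - (θ_a-ℏ)Q̌ - θ_b²/(4(Q̌-σ))`,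
i.e. `ℏ∂_σ Q̌ = 2(Q̌-σ)P̌ + ℏ` and `ℏ∂_σ P̌ = -∂Ham^{P4}/∂Q̌`, the canonical
Painlevé 4 Lax pair satisfies the zero-curvature equation
`ℏ∂_σ L̃₀^{P4}(ξ) = ℏ∂_ξ Ã₀^{P4}(ξ) + [Ã₀^{P4}(ξ), L̃₀^{P4}(ξ)]` for `ξ ≠ 0`. -/
theorem zero_curvature_P4
    (θa θb θc hbar : ℂ) (Qc Pc : ℂ → ℂ)
    (hQ : Differentiable ℂ Qc) (hP : Differentiable ℂ Pc)
    (hne : ∀ σ : ℂ, Qc σ ≠ σ)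
    (hflowQ : ∀ σ : ℂ, hbar * deriv Qc σ = 2*(Qc σ - σ)*Pc σ + hbar)
    (hflowP : ∀ σ : ℂ,
      hbar * deriv Pc σ
        = -(Pc σ)^2 + 3*(Qc σ)^2 - 2*σ*(Qc σ) + (θa - hbar)
          - θb^2/(4*(Qc σ - σ)^2)) :
    ∀ σ x : ℂ, x ≠ 0 →
      hbar • Matrix.of (fun i j : Fin 2 =>
          deriv (fun s => L0P4 θa θb θc (Qc s) (Pc s) s x i j) σ)
        = hbar • Matrix.of (fun i j : Fin 2 =>
            deriv (fun ξ => A0P4 θa (Qc σ) (Pc σ) σ ξ i j) x)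
          + (A0P4 θa (Qc σ) (Pc σ) σ x * L0P4 θa θb θc (Qc σ) (Pc σ) σ x
             - L0P4 θa θb θc (Qc σ) (Pc σ) σ x * A0P4 θa (Qc σ) (Pc σ) σ x) := by
  intro σ x hx
  have hd : Qc σ - σ ≠ 0 := sub_ne_zero.mpr (hne σ)
  have hd4 : 4 * (Qc σ - σ) ≠ 0 := mul_ne_zero (by norm_num) hd
  have e1 := hflowQ σ
  have e2 := hflowP σ
  have e2' : hbar * deriv Pc σ * (4*(Qc σ - σ)^2) =
      (-(Pc σ)^2 + 3*(Qc σ)^2 - 2*σ*(Qc σ) + (θa - hbar)) * (4*(Qc σ - σ)^2) - θb^2 := by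
    rw [e2]; field_simp
  have hQ' : HasDerivAt Qc (deriv Qc σ) σ := (hQ σ).hasDerivAt
  have hP' : HasDerivAt Pc (deriv Pc σ) σ := (hP σ).hasDerivAt
  have hid : HasDerivAt (fun s : ℂ => s) 1 σ := hasDerivAt_id σ
  have hD00 : HasDerivAt (fun s => -x - s + (Qc s * (Pc s + Qc s - s) - s * Pc s + θc / 2) / x)
      (-1 + (deriv Qc σ * (Pc σ + Qc σ - σ) + Qc σ * (deriv Pc σ + deriv Qc σ - 1)
        - Pc σ - σ * deriv Pc σ) / x) σ := by
    have h1 := (((hQ'.mul ((hP'.add hQ').sub hid)).sub (hid.mul hP')).add_const (θc/2)).div_const x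
    have h2 := ((hasDerivAt_const σ (-x)).sub hid).add h1
    refine h2.congr_deriv ?_
    simp only [Pi.add_apply, Pi.sub_apply, Pi.mul_apply, Pi.pow_apply]
    ring
  have hD01 : HasDerivAt (fun s => 1 + (s - Qc s) / x) ((1 - deriv Qc σ) / x) σ := by
    have h1 := (hid.sub hQ').div_const x
    have h2 := (hasDerivAt_const σ (1:ℂ)).add h1
    refine h2.congr_deriv ?_
    ring
  have hD10 : HasDerivAt (fun s => 2 * (Qc s - s) * (Qc s + Pc s) + θa
        + ((Qc s + Pc s) ^ 2 * (Qc s - s) - θb ^ 2 / (4 * (Qc s - s))) / x)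
      (2 * (deriv Qc σ - 1) * (Qc σ + Pc σ) + 2 * (Qc σ - σ) * (deriv Qc σ + deriv Pc σ)
        + (2 * (Qc σ + Pc σ) * (deriv Qc σ + deriv Pc σ) * (Qc σ - σ)
          + (Qc σ + Pc σ) ^ 2 * (deriv Qc σ - 1)
          + θb ^ 2 * (deriv Qc σ - 1) / (Qc σ - σ) ^ 2 / 4) / x) σ := by
    have ha := (((hQ'.sub hid).const_mul 2).mul (hQ'.add hP')).add_const θa
    have hden := (hQ'.sub hid).const_mul 4
    have hb := (hasDerivAt_const σ (θb ^ 2)).div hden (by simpa using hd4)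
    have hc := ((((hQ'.add hP').pow 2).mul (hQ'.sub hid)).sub hb).div_const x
    have h2 := ha.add hc
    refine h2.congr_deriv ?_
    simp only [Pi.add_apply, Pi.sub_apply, Pi.mul_apply, Pi.pow_apply]
    field_simp
    ring
  have hD11 : HasDerivAt (fun s => x + s + (-(Qc s * (Pc s + Qc s - s)) + s * Pc s + θc / 2) / x)
      (1 + (-(deriv Qc σ * (Pc σ + Qc σ - σ) + Qc σ * (deriv Pc σ + deriv Qc σ - 1))
        + Pc σ + σ * deriv Pc σ) / x) σ := by
    have h1 := ((((hQ'.mul ((hP'.add hQ').sub hid)).neg.add (hid.mul hP')).add_const (θc/2)).div_const x)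
    have h2 := ((hasDerivAt_const σ x).add hid).add h1
    refine h2.congr_deriv ?_
    simp only [Pi.add_apply, Pi.sub_apply, Pi.mul_apply, Pi.pow_apply]
    ring
  have hg00 : deriv (fun ξ : ℂ => -ξ - Qc σ) x = -1 := by
    have h : HasDerivAt (fun ξ : ℂ => -ξ - Qc σ) (-1) x := by
      simpa using ((hasDerivAt_id x).neg.sub_const (Qc σ))
    exact h.deriv
  have hg11 : deriv (fun ξ : ℂ => ξ + Qc σ) x = 1 := by
    have h : HasDerivAt (fun ξ : ℂ => ξ + Qc σ) 1 x := (hasDerivAt_id x).add_const (Qc σ)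
    exact h.deriv
  ext i j
  fin_cases i <;> fin_cases j <;>
    simp only [L0P4, A0P4, Matrix.smul_apply, Matrix.add_apply, Matrix.sub_apply,
      Matrix.mul_apply, Fin.sum_univ_two, Matrix.of_apply, Matrix.cons_val', Matrix.cons_val_zero,
      Matrix.cons_val_one, Matrix.head_cons, Matrix.head_fin_const, Matrix.empty_val',
      Matrix.cons_val_fin_one, smul_eq_mul, Fin.mk_zero, Fin.mk_one]
  · rw [hD00.deriv, hg00]
    have hD : 2 * x * (4 * (Qc σ - σ) * x) * (2 * x * x) ≠ 0 := by simp [hx, hd]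
    linear_combination (norm := (field_simp; ring)) ((Pc σ + 2*Qc σ - σ)/x) * e1 + ((Qc σ - σ)/x) * e2
  · rw [hD01.deriv, deriv_const]
    have hD : 2 * x * (4 * (Qc σ - σ) * x) * (2 * x * x) ≠ 0 := by simp [hx, hd]
    linear_combination (norm := (field_simp; ring)) (-1/x) * e1
  · rw [hD10.deriv, deriv_const]
    have hD3 : 2 * x * (4 * (Qc σ - σ) * x) * (4 * (Qc σ - σ) * x * (2 * x)) ≠ 0 := by
      simp [hx, hd]
    linear_combination (norm := (field_simp; ring)) (2*(Qc σ + Pc σ) + 2*(Qc σ - σ) + (2*(Qc σ + Pc σ)*(Qc σ - σ) + (Qc σ + Pc σ)^2 + θb^2/(Qc σ - σ)^2/4)/x) * e1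
      + (2*(Qc σ - σ) + 2*(Qc σ + Pc σ)*(Qc σ - σ)/x) * e2
  · rw [hD11.deriv, hg11]
    have hD2 : x * (2 * x) * (4 * (Qc σ - σ) * x * (2 * x)) ≠ 0 := by simp [hx, hd]
    linear_combination (norm := (field_simp; ring)) (-(Pc σ + 2*Qc σ - σ)/x) * e1 + (-(Qc σ - σ)/x) * e2


end P4Canonical
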